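/- Let $G$ be a group and let $\Phi\colon \mathbb{C}[G] \to \mathbb{C}[G]$ be a Jordan isomorphism of the complex group algebra such that for every $t \in G$ there exist $\zeta(t) \in \mathbb{T}$ and $\theta(t) \in G$ with $\Phi(\delta_t)=\zeta(t)\delta_{\theta(t)}$. Then $\Phi$ is either an algebra isomorphism or an algebra anti-isomorphism of $\mathbb{C}[G]$. -/

import Mathlib

private lemma two_unim {c₁ c₂ d : ℂ} (h1 : ‖c₁‖ = 1) (h2 : ‖c₂‖ = 1) (hd : ‖d‖ = 1)
    (h : c₁ + c₂ = d + d) : c₁ = d := by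
  have hns1 : Complex.normSq c₁ = 1 := by
    rw [Complex.normSq_eq_norm_sq, h1]; norm_num
  have hns2 : Complex.normSq c₂ = 1 := by
    rw [Complex.normSq_eq_norm_sq, h2]; norm_num
  have hnsd : Complex.normSq d = 1 := by
    rw [Complex.normSq_eq_norm_sq, hd]; norm_num
  have h4 : Complex.normSq (c₁ + c₂) = 4 := by
    rw [h]
    rw [show d + d = 2 * d by ring, Complex.normSq_mul, hnsd]
    norm_num [Complex.normSq_ofNat]
  have hre : (c₁ * starRingEnd ℂ c₂).re = 1 := by
    have := Complex.normSq_add c₁ c₂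
    rw [h4, hns1, hns2] at this
    linarith
  have hz : Complex.normSq (c₁ * starRingEnd ℂ c₂) = 1 := by
    rw [Complex.normSq_mul, Complex.normSq_conj, hns1, hns2]; norm_num
  have him : (c₁ * starRingEnd ℂ c₂).im = 0 := by
    have := Complex.normSq_apply (c₁ * starRingEnd ℂ c₂)
    rw [hz, hre] at this
    nlinarith [sq_nonneg (c₁ * starRingEnd ℂ c₂).im]
  have hone : c₁ * starRingEnd ℂ c₂ = 1 := by
    apply Complex.ext <;> simp [hre, him]
  have hcc : c₁ = c₂ := by
    have h' : c₁ * (starRingEnd ℂ c₂ * c₂) = c₂ := by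
      rw [← mul_assoc, hone, one_mul]
    rwa [mul_comm (starRingEnd ℂ c₂) c₂, Complex.mul_conj, hns2, Complex.ofReal_one,
      mul_one] at h'
  have h2c : c₁ + c₂ = 2 * c₁ := by rw [← hcc]; ring
  have : 2 * c₁ = 2 * d := by rw [← h2c, h]; ring
  exact mul_left_cancel₀ (by norm_num) this

private lemma single_cases {G : Type*} [DecidableEq G] {x₁ x₂ p q : G} {c₁ c₂ d : ℂ}
    (h1 : ‖c₁‖ = 1) (h2 : ‖c₂‖ = 1) (hd : ‖d‖ = 1)
    (h : Finsupp.single x₁ c₁ + Finsupp.single x₂ c₂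
        = Finsupp.single p d + Finsupp.single q d) :
    Finsupp.single x₁ c₁ = Finsupp.single p d ∨
      Finsupp.single x₁ c₁ = Finsupp.single q d := by
  have hd0 : d ≠ 0 := by intro h0; rw [h0] at hd; simp at hd
  have hc10 : c₁ ≠ 0 := by intro h0; rw [h0] at h1; simp at h1
  by_cases hx : x₁ = x₂
  · subst hx
    by_cases hpq : p = q
    · subst hpq
      by_cases hxp : x₁ = p
      · subst hxp
        left
        have hev : c₁ + c₂ = d + d := by
          have := DFunLike.congr_fun h x₁
          simpa only [Finsupp.add_apply, Finsupp.single_apply, if_pos rfl, if_true] using this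
        rw [two_unim h1 h2 hd hev]
      · exfalso
        have hev : (0 : ℂ) + 0 = d + d := by
          have := DFunLike.congr_fun h p
          simpa only [Finsupp.add_apply, Finsupp.single_apply, if_neg hxp, if_pos rfl, if_true]
            using this
        rw [zero_add] at hev
        exact hd0 (add_self_eq_zero.mp hev.symm)
    · exfalso
      have hqp : ¬q = p := fun hh => hpq hh.symm
      have hevp : ((if x₁ = p then c₁ else 0) + if x₁ = p then c₂ else 0) = d := by
        have := DFunLike.congr_fun h p
        simpa only [Finsupp.add_apply, Finsupp.single_apply, if_pos rfl, if_true, if_neg hqp,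
          add_zero] using this
      have hevq : ((if x₁ = q then c₁ else 0) + if x₁ = q then c₂ else 0) = d := by
        have := DFunLike.congr_fun h q
        simpa only [Finsupp.add_apply, Finsupp.single_apply, if_pos rfl, if_true, if_neg hpq,
          zero_add] using this
      by_cases hxp : x₁ = p
      · by_cases hxq : x₁ = q
        · exact hpq (hxp.symm.trans hxq)
        · rw [if_neg hxq, if_neg hxq, add_zero] at hevq
          exact hd0 hevq.symm
      · rw [if_neg hxp, if_neg hxp, add_zero] at hevp
        exact hd0 hevp.symm
  · have hev := DFunLike.congr_fun h x₁
    rw [Finsupp.add_apply, Finsupp.add_apply, Finsupp.single_apply, Finsupp.single_apply,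
      Finsupp.single_apply, Finsupp.single_apply] at hev
    rw [if_pos rfl, if_neg (Ne.symm hx)] at hev
    by_cases hp : p = x₁
    · by_cases hq : q = x₁
      · exfalso
        rw [if_pos hp, if_pos hq, add_zero] at hev
        have : ‖c₁‖ = 2 := by
          rw [hev, show d + d = 2*d by ring, norm_mul, hd]
          norm_num
        rw [h1] at this; norm_num at this
      · left
        rw [if_pos hp, if_neg hq, add_zero, add_zero] at hev
        rw [hev, ← hp]
    · by_cases hq : q = x₁
      · right
        rw [if_neg hp, if_pos hq, add_zero, zero_add] at hev
        rw [hev, ← hq]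
      · exfalso
        rw [if_neg hp, if_neg hq, add_zero, add_zero] at hev
        exact hc10 hev

section Jordan
variable {A : Type*} [Ring A] [Module ℂ A]
variable (Φ : A ≃ₗ[ℂ] A)

private lemma jordan_pair (hJ : ∀ a : A, Φ (a * a) = Φ a * Φ a) (x y : A) :
    Φ (x * y) + Φ (y * x) = Φ x * Φ y + Φ y * Φ x := by
  have key : (x + y) * (x + y) = x*x + (x*y + y*x) + y*y := by noncomm_ring
  have h := hJ (x + y)
  rw [key, map_add, map_add, map_add, map_add] at h
  rw [hJ x, hJ y] at h
  have expand : (Φ x + Φ y) * (Φ x + Φ y)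
      = Φ x * Φ x + (Φ x * Φ y + Φ y * Φ x) + Φ y * Φ y := by noncomm_ring
  rw [expand] at h
  exact add_left_cancel (add_right_cancel h)

private lemma jordan_triple_same (hJ : ∀ a : A, Φ (a * a) = Φ a * Φ a) (x y : A) :
    Φ (x * y * x) = Φ x * Φ y * Φ x := by
  have hsum := jordan_pair Φ hJ x y
  have key : x*(x*y + y*x) + (x*y + y*x)*x
      = (x*x*y + y*(x*x)) + (x*y*x + x*y*x) := by noncomm_ring
  have h := jordan_pair Φ hJ x (x*y + y*x)
  rw [← map_add, key, map_add, map_add, map_add, map_add] at h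
  rw [hsum] at h
  rw [jordan_pair Φ hJ (x*x) y] at h
  rw [hJ x] at h
  -- h : Φx*Φx*Φy + Φy*(Φx*Φx) + (Φ(xyx) + Φ(xyx)) = Φx*(ΦxΦy+ΦyΦx) + (ΦxΦy+ΦyΦx)*Φx
  have t2 : Φ (x*y*x) + Φ (x*y*x)
      = Φ x * (Φ x * Φ y + Φ y * Φ x) + (Φ x * Φ y + Φ y * Φ x) * Φ x
        - (Φ x * Φ x * Φ y + Φ y * (Φ x * Φ x)) := by
    rw [← h]; abel
  have t3 : Φ x * (Φ x * Φ y + Φ y * Φ x) + (Φ x * Φ y + Φ y * Φ x) * Φ x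
        - (Φ x * Φ x * Φ y + Φ y * (Φ x * Φ x))
      = Φ x * Φ y * Φ x + Φ x * Φ y * Φ x := by noncomm_ring
  have t4 : (2:ℂ) • Φ (x*y*x) = (2:ℂ) • (Φ x * Φ y * Φ x) := by
    rw [two_smul, two_smul]
    exact (t2.trans t3)
  exact smul_right_injective A two_ne_zero t4

private lemma jordan_triple (hJ : ∀ a : A, Φ (a * a) = Φ a * Φ a) (x y z : A) :
    Φ (x * y * z) + Φ (z * y * x) = Φ x * Φ y * Φ z + Φ z * Φ y * Φ x := by
  have key : (x + z) * y * (x + z) = x*y*x + (x*y*z + z*y*x) + z*y*z := by noncomm_ring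
  have h := jordan_triple_same Φ hJ (x + z) y
  rw [key, map_add, map_add, map_add, map_add] at h
  rw [jordan_triple_same Φ hJ x y, jordan_triple_same Φ hJ z y] at h
  -- h : ΦxΦyΦx + (Φ(xyz) + Φ(zyx)) + ΦzΦyΦz = (Φx + Φz) * Φ y * (Φx + Φz)
  have t2 : Φ (x*y*z) + Φ (z*y*x)
      = (Φ x + Φ z) * Φ y * (Φ x + Φ z) - Φ x * Φ y * Φ x - Φ z * Φ y * Φ z := by
    rw [← h]; abel
  rw [t2]; noncomm_ring

end Jordan

private lemma half_hom_dichotomy {G M : Type*} [Group G] [Monoid M] (F : G → M)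
    (hU : ∀ t, IsUnit (F t))
    (hP : ∀ s t, F (s * t) = F s * F t ∨ F (s * t) = F t * F s)
    (hT : ∀ s t u, F (s * t * u) = F s * F t * F u ∨ F (s * t * u) = F u * F t * F s) :
    (∀ s t, F (s * t) = F s * F t) ∨ (∀ s t, F (s * t) = F t * F s) := by
  by_contra hc
  push_neg at hc
  obtain ⟨⟨c, d, hcd⟩, ⟨a, b, hab⟩⟩ := hc
  have cancelL : ∀ (w : G) {m n : M}, F w * m = F w * n → m = n := by
    intro w m n hmn; exact (hU w).mul_left_cancel hmn
  have cancelR : ∀ (w : G) {m n : M}, m * F w = n * F w → m = n := by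
    intro w m n hmn; exact (hU w).mul_right_cancel hmn
  have hab1 : F (a * b) = F a * F b := (hP a b).resolve_right hab
  have habne : F a * F b ≠ F b * F a := fun hh => hab (hab1.trans hh)
  have hcd1 : F (c * d) = F d * F c := (hP c d).resolve_left hcd
  have hcdne : F d * F c ≠ F c * F d := fun hh => hcd (hcd1.trans hh)
  have hcdne2 : F c * F d ≠ F d * F c := fun hh => hcdne hh.symm
  -- goodness constructors
  have goodL : ∀ u v, F (u * v) = F u * F v → F u * F v ≠ F v * F u →
      ∀ y, F (u * v * y) = F u * F v * F y := by
    intro u v h1 h2 y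
    rcases hT u v y with h | h
    · exact h
    rcases hP (u * v) y with h' | h'
    · rw [h1] at h'; exact h'
    · rw [h1] at h'
      exfalso
      apply h2
      apply cancelL y
      rw [← h', h, mul_assoc]
  have antiL : ∀ u v, F (u * v) = F v * F u → F u * F v ≠ F v * F u →
      ∀ y, F (u * v * y) = F y * (F v * F u) := by
    intro u v h1 h2 y
    rcases hP (u * v) y with h' | h'
    · rw [h1] at h'
      rcases hT u v y with h | h
      · exfalso
        apply h2
        apply cancelR y
        rw [← h]; exact h'
      · rw [h]; exact mul_assoc _ _ _
    · rw [h1] at h'; exact h'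
  have antiR : ∀ u v, F (u * v) = F v * F u → F u * F v ≠ F v * F u →
      ∀ y, F (y * (u * v)) = F v * F u * F y := by
    intro u v h1 h2 y
    rcases hP y (u * v) with h' | h'
    · rw [h1] at h'
      have hass : y * u * v = y * (u * v) := mul_assoc y u v
      rcases hT y u v with h | h
      · rw [hass] at h
        exfalso
        apply h2
        apply cancelL y
        rw [← mul_assoc, ← h]; exact h'
      · rw [hass] at h
        exact h
    · rw [h1] at h'; exact h'
  -- hom-side killer pair
  have gAll : ∀ y, F ((a*b) * y) = F (a*b) * F y := by
    intro y; rw [hab1]; exact goodL a b hab1 habne y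
  by_cases hex : ∀ x, F (a*b) * F x = F x * F (a*b)
  · have hthis := hex a
    rw [hab1, mul_assoc] at hthis
    exact habne ((cancelL a hthis).symm)
  · push_neg at hex; obtain ⟨x₁, hx₁⟩ := hex
    have hg1 : F ((a*b) * x₁) = F (a*b) * F x₁ := gAll x₁
    have hAll : ∀ y, F ((a*b*x₁) * y) = F (a*b*x₁) * F y := by
      intro y
      have hthis := goodL (a*b) x₁ hg1 hx₁ y
      rw [← hg1] at hthis
      exact hthis
    have hgh : F (a*b) * F (a*b*x₁) ≠ F (a*b*x₁) * F (a*b) := by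
      intro heq
      rw [hg1, mul_assoc] at heq
      exact hx₁ (cancelL (a*b) heq)
    -- anti-side killer pair
    have sAllL : ∀ y, F ((c*d) * y) = F y * F (c*d) := by
      intro y; rw [hcd1]; exact antiL c d hcd1 hcdne2 y
    have sAllR : ∀ y, F (y * (c*d)) = F (c*d) * F y := by
      intro y; rw [hcd1]; exact antiR c d hcd1 hcdne2 y
    by_cases hex2 : ∀ x, F (c*d) * F x = F x * F (c*d)
    · have hthis := hex2 c
      rw [hcd1, ← mul_assoc] at hthis
      exact hcdne (cancelR c hthis)
    · push_neg at hex2; obtain ⟨x₂, hx₂⟩ := hex2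
      have hs1 : F ((c*d) * x₂) = F x₂ * F (c*d) := sAllL x₂
      have tAllL : ∀ y, F ((c*d*x₂) * y) = F y * F (c*d*x₂) := by
        intro y
        have hthis := antiL (c*d) x₂ hs1 hx₂ y
        rw [← hs1] at hthis
        exact hthis
      have tAllR : ∀ y, F (y * (c*d*x₂)) = F (c*d*x₂) * F y := by
        intro y
        have hthis := antiR (c*d) x₂ hs1 hx₂ y
        rw [← hs1] at hthis
        exact hthis
      have hst : F (c*d) * F (c*d*x₂) ≠ F (c*d*x₂) * F (c*d) := by
        intro heq
        rw [hs1, ← mul_assoc] at heq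
        exact hx₂ (cancelR (c*d) heq)
      -- final contradiction
      set g := a*b with hgdef
      set h := a*b*x₁ with hhdef
      set s := c*d with hsdef
      set t := c*d*x₂ with htdef
      have comm_gt : F g * F t = F t * F g := (gAll t).symm.trans (tAllR g)
      have comm_hs : F h * F s = F s * F h := (hAll s).symm.trans (sAllR h)
      have e1 : F (g * (s * (h * t))) = F g * (F t * F h * F s) := by
        rw [gAll (s * (h * t)), sAllL (h * t), tAllR h]
      have hassoc : g * s * (h * t) = g * (s * (h * t)) := mul_assoc g s (h*t)
      rcases hP (g*s) (h*t) with hp | hp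
      · rw [hassoc, e1, gAll s, tAllR h] at hp
        -- hp : F g * (F t * F h * F s) = F g * F s * (F t * F h)
        rw [mul_assoc (F g) (F s) (F t * F h)] at hp
        have hcan := cancelL g hp
        -- hcan : F t * F h * F s = F s * (F t * F h)
        rw [mul_assoc (F t) (F h) (F s), comm_hs, ← mul_assoc, ← mul_assoc] at hcan
        -- hcan : F t * F s * F h = F s * F t * F h
        have := cancelR h hcan
        exact hst this.symm
      · rw [hassoc, e1, gAll s, tAllR h] at hp
        -- hp : F g * (F t * F h * F s) = F t * F h * (F g * F s)
        rw [← mul_assoc (F g) (F t * F h) (F s)] at hp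
        rw [← mul_assoc (F t * F h) (F g) (F s)] at hp
        have hcan := cancelR s hp
        -- hcan : F g * (F t * F h) = F t * F h * F g
        rw [← mul_assoc (F g) (F t) (F h), comm_gt, mul_assoc (F t) (F g) (F h),
          mul_assoc (F t) (F h) (F g)] at hcan
        have := cancelL t hcan
        exact hgh this


/-- A Jordan isomorphism of the complex group algebra `ℂ[G]` which sends each
`δ_t` to a unimodular multiple of some `δ_x` is either an algebra isomorphism or
an algebra anti-isomorphism. -/
theorem stmt_12 {G : Type*} [Group G]
    (Φ : MonoidAlgebra ℂ G ≃ₗ[ℂ] MonoidAlgebra ℂ G)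
    (hJ : ∀ a : MonoidAlgebra ℂ G, Φ (a * a) = Φ a * Φ a)
    (hδ : ∀ t : G, ∃ ζ : ℂ, ‖ζ‖ = 1 ∧ ∃ x : G,
      Φ (MonoidAlgebra.single t 1) = ζ • MonoidAlgebra.single x 1) :
    (∀ a b : MonoidAlgebra ℂ G, Φ (a * b) = Φ a * Φ b) ∨
      (∀ a b : MonoidAlgebra ℂ G, Φ (a * b) = Φ b * Φ a) := by
  classical
  choose ζ hζ θ hθ using hδ
  have hζ0 : ∀ t, ζ t ≠ 0 := by
    intro t h0
    have := hζ t
    rw [h0] at this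
    simp at this
  have hθs : ∀ t, Φ (MonoidAlgebra.single t 1) = MonoidAlgebra.single (θ t) (ζ t) := by
    intro t
    rw [hθ t, MonoidAlgebra.smul_single', mul_one]
  have hprod : ∀ s t : G, Φ (MonoidAlgebra.single s 1) * Φ (MonoidAlgebra.single t 1)
      = MonoidAlgebra.single (θ s * θ t) (ζ s * ζ t) := by
    intro s t
    rw [hθs s, hθs t, MonoidAlgebra.single_mul_single]
  have hprod3 : ∀ s t u : G, Φ (MonoidAlgebra.single s 1) * Φ (MonoidAlgebra.single t 1)
        * Φ (MonoidAlgebra.single u 1)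
      = MonoidAlgebra.single (θ s * θ t * θ u) (ζ s * ζ t * ζ u) := by
    intro s t u
    rw [hprod s t, hθs u, MonoidAlgebra.single_mul_single]
  have hU : ∀ t : G, IsUnit (Φ (MonoidAlgebra.single t 1)) := by
    intro t
    rw [hθs t]
    refine ⟨⟨MonoidAlgebra.single (θ t) (ζ t),
      MonoidAlgebra.single (θ t)⁻¹ (ζ t)⁻¹, ?_, ?_⟩, rfl⟩
    · rw [MonoidAlgebra.single_mul_single, mul_inv_cancel₀ (hζ0 t), mul_inv_cancel]
      exact MonoidAlgebra.one_def.symm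
    · rw [MonoidAlgebra.single_mul_single, inv_mul_cancel₀ (hζ0 t), inv_mul_cancel]
      exact MonoidAlgebra.one_def.symm
  have hnorm2 : ∀ s t : G, ‖ζ s * ζ t‖ = 1 := by
    intro s t; rw [norm_mul, hζ s, hζ t, mul_one]
  have hnorm3 : ∀ s t u : G, ‖ζ s * ζ t * ζ u‖ = 1 := by
    intro s t u; rw [norm_mul, hnorm2 s t, hζ u, mul_one]
  have hP : ∀ s t : G, Φ (MonoidAlgebra.single (s * t) 1)
        = Φ (MonoidAlgebra.single s 1) * Φ (MonoidAlgebra.single t 1)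
      ∨ Φ (MonoidAlgebra.single (s * t) 1)
        = Φ (MonoidAlgebra.single t 1) * Φ (MonoidAlgebra.single s 1) := by
    intro s t
    have h := jordan_pair Φ hJ (MonoidAlgebra.single s 1) (MonoidAlgebra.single t 1)
    rw [MonoidAlgebra.single_mul_single, MonoidAlgebra.single_mul_single, one_mul] at h
    rw [hθs (s*t), hθs (t*s), hprod s t, hprod t s, mul_comm (ζ t) (ζ s)] at h
    rcases single_cases (x₁ := θ (s*t)) (x₂ := θ (t*s)) (p := θ s * θ t) (q := θ t * θ s)
      (hζ (s*t)) (hζ (t*s)) (hnorm2 s t) (congrArg MonoidAlgebra.coeff h) with hh | hh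
    · left; rw [hθs (s*t), hprod s t]; exact congrArg MonoidAlgebra.ofCoeff hh
    · right; rw [hθs (s*t), hprod t s, mul_comm (ζ t) (ζ s)]; exact congrArg MonoidAlgebra.ofCoeff hh
  have hT : ∀ s t u : G, Φ (MonoidAlgebra.single (s * t * u) 1)
        = Φ (MonoidAlgebra.single s 1) * Φ (MonoidAlgebra.single t 1)
          * Φ (MonoidAlgebra.single u 1)
      ∨ Φ (MonoidAlgebra.single (s * t * u) 1)
        = Φ (MonoidAlgebra.single u 1) * Φ (MonoidAlgebra.single t 1)
          * Φ (MonoidAlgebra.single s 1) := by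
    intro s t u
    have h := jordan_triple Φ hJ (MonoidAlgebra.single s 1) (MonoidAlgebra.single t 1)
      (MonoidAlgebra.single u 1)
    rw [MonoidAlgebra.single_mul_single, MonoidAlgebra.single_mul_single,
      MonoidAlgebra.single_mul_single, MonoidAlgebra.single_mul_single,
      one_mul, one_mul] at h
    rw [hθs (s*t*u), hθs (u*t*s), hprod3 s t u, hprod3 u t s,
      show ζ u * ζ t * ζ s = ζ s * ζ t * ζ u by ring] at h
    rcases single_cases (x₁ := θ (s*t*u)) (x₂ := θ (u*t*s)) (p := θ s * θ t * θ u)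
      (q := θ u * θ t * θ s) (hζ (s*t*u)) (hζ (u*t*s)) (hnorm3 s t u)
      (congrArg MonoidAlgebra.coeff h) with hh | hh
    · left; rw [hθs (s*t*u), hprod3 s t u]; exact congrArg MonoidAlgebra.ofCoeff hh
    · right
      rw [hθs (s*t*u), hprod3 u t s, show ζ u * ζ t * ζ s = ζ s * ζ t * ζ u by ring]
      exact congrArg MonoidAlgebra.ofCoeff hh
  rcases half_hom_dichotomy (fun t : G => Φ (MonoidAlgebra.single t 1)) hU hP hT with hhom | hanti
  · left
    have hsingles : ∀ s t : G,
        Φ (MonoidAlgebra.single s 1 * MonoidAlgebra.single t 1)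
          = Φ (MonoidAlgebra.single s 1) * Φ (MonoidAlgebra.single t 1) := by
      intro s t
      rw [MonoidAlgebra.single_mul_single, one_mul]
      exact hhom s t
    intro x y
    refine MonoidAlgebra.induction_on (motive := fun x => ∀ y, Φ (x * y) = Φ x * Φ y) x ?_ ?_ ?_ y
    · intro g y
      refine MonoidAlgebra.induction_on (motive := fun y => Φ (MonoidAlgebra.of ℂ G g * y)
        = Φ (MonoidAlgebra.of ℂ G g) * Φ y) y ?_ ?_ ?_
      · intro h
        exact hsingles g h
      · intro f₁ f₂ h₁ h₂
        rw [mul_add, map_add, h₁, h₂, map_add, mul_add]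
      · intro r f hf
        rw [mul_smul_comm, map_smul, hf, map_smul, mul_smul_comm]
    · intro f g hf hg y
      rw [add_mul, map_add, hf, hg, map_add, add_mul]
    · intro r f hf y
      rw [smul_mul_assoc, map_smul, hf, map_smul, smul_mul_assoc]
  · right
    have hsingles : ∀ s t : G,
        Φ (MonoidAlgebra.single s 1 * MonoidAlgebra.single t 1)
          = Φ (MonoidAlgebra.single t 1) * Φ (MonoidAlgebra.single s 1) := by
      intro s t
      rw [MonoidAlgebra.single_mul_single, one_mul]
      exact hanti s t
    intro x y
    refine MonoidAlgebra.induction_on (motive := fun x => ∀ y, Φ (x * y) = Φ y * Φ x) x ?_ ?_ ?_ y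
    · intro g y
      refine MonoidAlgebra.induction_on (motive := fun y => Φ (MonoidAlgebra.of ℂ G g * y)
        = Φ y * Φ (MonoidAlgebra.of ℂ G g)) y ?_ ?_ ?_
      · intro h
        exact hsingles g h
      · intro f₁ f₂ h₁ h₂
        rw [mul_add, map_add, h₁, h₂, map_add, add_mul]
      · intro r f hf
        rw [mul_smul_comm, map_smul, hf, map_smul, smul_mul_assoc]
    · intro f g hf hg y
      rw [add_mul, map_add, hf, hg, map_add, mul_add]
    · intro r f hf y
      rw [smul_mul_assoc, map_smul, hf, map_smul, mul_smul_comm]
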